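/- If a probability measure F on [0,∞) belongs to 𝓛_{Δ_d} for some d > 0, then F is heavy-tailed: ∫_0^∞ e^{ε y} F(dy) = ∞ for every constant ε > 0. -/
import Mathlib


open MeasureTheory Filter Set

noncomputable section

/-- A probability density supported on `[0, ∞)`. -/
def IsDensity (f : ℝ → ℝ) : Prop :=
  Measurable f ∧ (∀ x < (0:ℝ), f x = 0) ∧ (∀ x : ℝ, 0 ≤ f x) ∧
    ∫ y in Set.Ioi (0:ℝ), f y = 1

/-- The long-tailed density class `𝓛₀`. -/
def LongTailedDensity (f : ℝ → ℝ) : Prop :=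
  (∀ᶠ x in atTop, 0 < f x) ∧
  ∀ t : ℝ, Tendsto (fun x => f (x + t) / f x) atTop (nhds 1)

/-- The subexponential density class `𝓢₀`. -/
def SubexpDensity (f : ℝ → ℝ) : Prop :=
  LongTailedDensity f ∧
  Tendsto (fun x => (∫ y in (0:ℝ)..x, f (x - y) * f y) / f x) atTop (nhds 2)

/-- The local mass `F((x, x+d])` of a measure, as a real number. -/
def locMass (F : Measure ℝ) (d x : ℝ) : ℝ := (F (Set.Ioc x (x + d))).toReal

/-- `F ∈ 𝓛_{Δ_d}`. -/
def MemLdelta (F : Measure ℝ) (d : ℝ) : Prop :=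
  (∀ᶠ x in atTop, 0 < locMass F d x) ∧
  ∀ t > (0:ℝ), ∀ ε > (0:ℝ), ∀ᶠ x in atTop, ∀ s : ℝ, |s| ≤ t →
    |locMass F d (x + s) / locMass F d x - 1| ≤ ε

/-- Convolution of two measures on `ℝ`: the law of the sum of two
independent random variables with laws `F` and `G`. -/
def mconv (F G : Measure ℝ) : Measure ℝ :=
  Measure.map (fun p : ℝ × ℝ => p.1 + p.2) (F.prod G)

/-- `F ∈ 𝓢_{Δ_d}`. -/
def MemSdelta (F : Measure ℝ) (d : ℝ) : Prop :=
  MemLdelta F d ∧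
  Tendsto (fun x => locMass (mconv F F) d x / locMass F d x) atTop (nhds 2)

/-- The probability measure on `[0,∞)` with density `f`. -/
def densMeasure (f : ℝ → ℝ) : Measure ℝ :=
  volume.withDensity (fun y => ENNReal.ofReal (f y))

theorem heavy_tailed_of_mem_Ldelta (F : Measure ℝ)
    (hF : IsProbabilityMeasure F) (hsupp : F (Set.Iio 0) = 0)
    (d : ℝ) (hd : 0 < d) (hL : MemLdelta F d) :
    ∀ ε > (0:ℝ),
      ∫⁻ y in Set.Ici (0:ℝ), ENNReal.ofReal (Real.exp (ε * y)) ∂F = ⊤ := by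
  intro ε hε
  set e0 : ℝ := Real.exp (-(ε * d / 2)) with he0
  have he0pos : 0 < e0 := Real.exp_pos _
  have he0lt : e0 < 1 := by
    rw [he0]
    apply Real.exp_lt_one_iff.mpr
    nlinarith
  have hεd : (0:ℝ) < 1 - e0 := by linarith
  obtain ⟨X, hX⟩ := eventually_atTop.mp
    ((hL.1.and (hL.2 d hd (1 - e0) hεd)).and (eventually_ge_atTop (0:ℝ)))
  have hX0 : (0:ℝ) ≤ X := (hX X le_rfl).2
  -- one step
  have hstep : ∀ x, X ≤ x → e0 * locMass F d x ≤ locMass F d (x + d) := by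
    intro x hx
    obtain ⟨⟨hpos, hrat⟩, _⟩ := hX x hx
    have h := hrat d (by rw [abs_of_pos hd])
    have h1 := (abs_le.mp h).1
    have h2 : e0 ≤ locMass F d (x + d) / locMass F d x := by linarith
    calc e0 * locMass F d x
        ≤ (locMass F d (x + d) / locMass F d x) * locMass F d x :=
          mul_le_mul_of_nonneg_right h2 hpos.le
      _ = locMass F d (x + d) := div_mul_cancel₀ _ hpos.ne'
  -- induction
  have hind : ∀ n : ℕ, e0 ^ n * locMass F d X ≤ locMass F d (X + n * d) := by
    intro n
    induction n with
    | zero => simp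
    | succ n ih =>
      have hx : X ≤ X + n * d := le_add_of_nonneg_right (by positivity)
      have hs := hstep (X + n * d) hx
      have : e0 ^ (n + 1) * locMass F d X = e0 * (e0 ^ n * locMass F d X) := by ring
      rw [this]
      calc e0 * (e0 ^ n * locMass F d X)
          ≤ e0 * locMass F d (X + n * d) := mul_le_mul_of_nonneg_left ih he0pos.le
        _ ≤ locMass F d (X + n * d + d) := hs
        _ = locMass F d (X + (n + 1 : ℕ) * d) := by push_cast; ring_nf
  set c : ℝ := locMass F d X with hc
  have hcpos : 0 < c := (hX X le_rfl).1.1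
  -- lower bound on integral for each n
  have hbound : ∀ n : ℕ,
      ENNReal.ofReal (Real.exp (ε * (X + n * d)) * (e0 ^ n * c)) ≤
        ∫⁻ y in Set.Ici (0:ℝ), ENNReal.ofReal (Real.exp (ε * y)) ∂F := by
    intro n
    set a : ℝ := X + n * d with ha
    have ha0 : (0:ℝ) ≤ a := by positivity
    have hsub : Set.Ioc a (a + d) ⊆ Set.Ici (0:ℝ) := fun y hy => le_of_lt (lt_of_le_of_lt ha0 hy.1)
    calc ENNReal.ofReal (Real.exp (ε * a) * (e0 ^ n * c))
        ≤ ENNReal.ofReal (Real.exp (ε * a) * locMass F d a) := by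
          apply ENNReal.ofReal_le_ofReal
          exact mul_le_mul_of_nonneg_left (hind n) (Real.exp_pos _).le
      _ = ENNReal.ofReal (Real.exp (ε * a)) * F (Set.Ioc a (a + d)) := by
          rw [ENNReal.ofReal_mul (Real.exp_pos _).le, locMass,
            ENNReal.ofReal_toReal (measure_ne_top F _)]
      _ = ∫⁻ _ in Set.Ioc a (a + d), ENNReal.ofReal (Real.exp (ε * a)) ∂F := by
          rw [setLIntegral_const]
      _ ≤ ∫⁻ y in Set.Ioc a (a + d), ENNReal.ofReal (Real.exp (ε * y)) ∂F := by
          apply setLIntegral_mono ((Real.measurable_exp.comp (measurable_id.const_mul ε)).ennreal_ofReal)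
          intro y hy
          exact ENNReal.ofReal_le_ofReal (Real.exp_le_exp.mpr
            (mul_le_mul_of_nonneg_left hy.1.le hε.le))
      _ ≤ ∫⁻ y in Set.Ici (0:ℝ), ENNReal.ofReal (Real.exp (ε * y)) ∂F :=
          lintegral_mono_set hsub
  -- conclude
  by_contra hI
  set I := ∫⁻ y in Set.Ici (0:ℝ), ENNReal.ofReal (Real.exp (ε * y)) ∂F with hIdef
  set M : ℝ := I.toReal with hM
  obtain ⟨n, hn⟩ := exists_nat_gt ((M / c - ε * X) / (ε * d / 2))
  have hy : M / c < ε * X + ε * d / 2 * n := by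
    have hεd2 : (0:ℝ) < ε * d / 2 := by positivity
    have := (div_lt_iff₀ hεd2).mp hn
    linarith
  have hterm : M < Real.exp (ε * (X + n * d)) * (e0 ^ n * c) := by
    have hexp : e0 ^ n = Real.exp ((n : ℝ) * (-(ε * d / 2))) := by
      rw [Real.exp_nat_mul]
    have hcomb : Real.exp (ε * (X + n * d)) * e0 ^ n
        = Real.exp (ε * X + ε * d / 2 * n) := by
      rw [hexp, ← Real.exp_add]; ring_nf
    have h1 : M / c < Real.exp (ε * X + ε * d / 2 * n) := by
      have := Real.add_one_le_exp (ε * X + ε * d / 2 * n)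
      linarith
    calc M = (M / c) * c := by field_simp
      _ < Real.exp (ε * X + ε * d / 2 * n) * c :=
          mul_lt_mul_of_pos_right h1 hcpos
      _ = Real.exp (ε * (X + n * d)) * (e0 ^ n * c) := by rw [← hcomb]; ring
  have hle := hbound n
  have := (ENNReal.ofReal_le_iff_le_toReal hI).mp hle
  linarith
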